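/- For every real α ≥ 1 and every real c > 1, there exists a unique real γ in the open interval (1, 1 + (c−1)/α) such that D(1/α ‖ (γ−1)/(c−1)) = ln(c)/α. -/

import Mathlib

/-- Kullback–Leibler divergence `D(a‖b) = a·ln(a/b) + (1−a)·ln((1−a)/(1−b))`.
(The convention `0·ln 0 = 0` holds automatically since `Real.log 0 = 0`.) -/
noncomputable def klDiv (a b : ℝ) : ℝ :=
  a * Real.log (a / b) + (1 - a) * Real.log ((1 - a) / (1 - b))

lemma exists_unique_b (a t : ℝ) (ha : 0 < a) (ha1 : a ≤ 1) (ht : 0 < t) :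
    ∃! b : ℝ, b ∈ Set.Ioo 0 a ∧ klDiv a b = t := by
  set C : ℝ := a * Real.log a + (1 - a) * Real.log (1 - a) with hC
  set h : ℝ → ℝ := fun b => C - a * Real.log b - (1 - a) * Real.log (1 - b) with hh
  -- klDiv agrees with h on Ioc 0 a
  have hEq : ∀ b ∈ Set.Ioc 0 a, klDiv a b = h b := by
    intro b ⟨hb0, hba⟩
    simp only [klDiv, hh]
    rw [Real.log_div ha.ne' hb0.ne']
    rcases ha1.eq_or_lt with rfl | h1
    · rw [hC]; norm_num [Real.log_one]
    · have hb1 : b < 1 := lt_of_le_of_lt hba h1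
      rw [Real.log_div (by linarith) (by linarith)]
      ring
  -- continuity
  have hcont : ContinuousOn h (Set.Ioc 0 a) := by
    apply ContinuousOn.sub
    apply ContinuousOn.sub continuousOn_const
    · exact continuousOn_const.mul (Real.continuousOn_log.mono (by
        intro x hx; simp; exact hx.1.ne'))
    · rcases ha1.eq_or_lt with rfl | h1
      · have : (fun b : ℝ => ((1:ℝ) - 1) * Real.log (1 - b)) = fun _ => 0 := by
          funext b; ring
        rw [this]; exact continuousOn_const
      · apply continuousOn_const.mul
        apply ContinuousOn.log (continuousOn_const.sub continuousOn_id)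
        intro x hx
        have : x < 1 := lt_of_le_of_lt hx.2 h1
        intro hcontra; simp at hcontra; linarith
  -- strict antitonicity
  have hanti : StrictAntiOn h (Set.Ioc 0 a) := by
    apply strictAntiOn_of_deriv_neg (convex_Ioc 0 a) hcont
    intro x hx
    rw [interior_Ioc] at hx
    obtain ⟨hx0, hxa⟩ := hx
    have hx1 : x < 1 := lt_of_lt_of_le hxa ha1
    have h1x : 0 < 1 - x := by linarith
    have d1 : HasDerivAt (fun b : ℝ => Real.log b) x⁻¹ x := Real.hasDerivAt_log hx0.ne'
    have d2 : HasDerivAt (fun b : ℝ => (1 : ℝ) - b) (-1) x := by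
      simpa using (hasDerivAt_id x).const_sub (1:ℝ)
    have d3 : HasDerivAt (fun b : ℝ => Real.log (1 - b)) ((1 - x)⁻¹ * (-1)) x :=
      (Real.hasDerivAt_log h1x.ne').comp x d2
    have D : HasDerivAt h (0 - a * x⁻¹ - (1 - a) * ((1 - x)⁻¹ * (-1))) x := by
      exact ((hasDerivAt_const x C).sub (d1.const_mul a)).sub (d3.const_mul (1 - a))
    rw [D.deriv]
    have h4 : (1 - a) / (1 - x) < a / x := by
      rw [div_lt_div_iff₀ h1x hx0]; nlinarith
    simp only [div_eq_mul_inv] at h4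
    nlinarith
  -- endpoint value
  have hha : h a = 0 := by simp only [hh]; ring
  -- existence via IVT
  set ε : ℝ := min (a / 2) (Real.exp ((C - t) / a)) with hε
  have hε0 : 0 < ε := lt_min (by linarith) (Real.exp_pos _)
  have hεa : ε < a := lt_of_le_of_lt (min_le_left _ _) (by linarith)
  have hεt : t ≤ h ε := by
    have hlog : Real.log ε ≤ (C - t) / a := by
      calc Real.log ε ≤ Real.log (Real.exp ((C - t) / a)) :=
            Real.log_le_log hε0 (min_le_right _ _)
        _ = (C - t) / a := Real.log_exp _
    have h1 : a * Real.log ε ≤ C - t := by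
      have := (le_div_iff₀ ha).1 hlog
      linarith [mul_comm a (Real.log ε)]
    have h2 : Real.log (1 - ε) ≤ 0 := Real.log_nonpos (by linarith) (by linarith)
    have h3 : (1 - a) * Real.log (1 - ε) ≤ 0 :=
      mul_nonpos_of_nonneg_of_nonpos (by linarith) h2
    simp only [hh]; linarith
  have hIcc : Set.Icc ε a ⊆ Set.Ioc 0 a := fun x hx => ⟨lt_of_lt_of_le hε0 hx.1, hx.2⟩
  obtain ⟨b₀, hb₀mem, hb₀eq⟩ := intermediate_value_Icc' hεa.le (hcont.mono hIcc)
    (⟨hha ▸ ht.le, hεt⟩ : t ∈ Set.Icc (h a) (h ε))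
  have hb₀a : b₀ < a := by
    rcases lt_or_eq_of_le hb₀mem.2 with h' | rfl
    · exact h'
    · exfalso; rw [hha] at hb₀eq; linarith
  have hb₀Ioo : b₀ ∈ Set.Ioo 0 a := ⟨lt_of_lt_of_le hε0 hb₀mem.1, hb₀a⟩
  refine ⟨b₀, ⟨hb₀Ioo, (hEq b₀ ⟨hb₀Ioo.1, hb₀Ioo.2.le⟩).trans hb₀eq⟩, ?_⟩
  rintro b ⟨hbmem, hbeq⟩
  have h1 : b ∈ Set.Ioc 0 a := ⟨hbmem.1, hbmem.2.le⟩
  have h2 : b₀ ∈ Set.Ioc 0 a := ⟨hb₀Ioo.1, hb₀Ioo.2.le⟩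
  apply hanti.injOn h1 h2
  rw [← hEq b h1, ← hEq b₀ h2, hbeq, hEq b₀ h2]
  exact hb₀eq.symm

/-- For every real `α ≥ 1` and every real `c > 1`, there exists a unique real `γ`
in the open interval `(1, 1 + (c−1)/α)` such that `D(1/α ‖ (γ−1)/(c−1)) = ln(c)/α`. -/
theorem stmt0 (α c : ℝ) (hα : 1 ≤ α) (hc : 1 < c) :
    ∃! γ : ℝ, γ ∈ Set.Ioo 1 (1 + (c - 1) / α) ∧
      klDiv (1 / α) ((γ - 1) / (c - 1)) = Real.log c / α := by
  have hα0 : 0 < α := by linarith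
  have hc1 : 0 < c - 1 := by linarith
  have ha : 0 < 1 / α := by positivity
  have ha1 : 1 / α ≤ 1 := by rw [div_le_one hα0]; exact hα
  have ht : 0 < Real.log c / α := div_pos (Real.log_pos hc) hα0
  obtain ⟨b₀, ⟨hb₀mem, hb₀eq⟩, huniq⟩ := exists_unique_b (1 / α) (Real.log c / α) ha ha1 ht
  refine ⟨1 + (c - 1) * b₀, ⟨⟨by nlinarith [hb₀mem.1], ?_⟩, ?_⟩, ?_⟩
  · have : (c - 1) * b₀ < (c - 1) * (1 / α) :=
      mul_lt_mul_of_pos_left hb₀mem.2 hc1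
    have e : (c - 1) / α = (c - 1) * (1 / α) := by ring
    linarith [e ▸ this]
  · have e : (1 + (c - 1) * b₀ - 1) / (c - 1) = b₀ := by field_simp; ring
    rw [e]; exact hb₀eq
  · rintro γ ⟨⟨hγ1, hγ2⟩, hγeq⟩
    have hb : (γ - 1) / (c - 1) ∈ Set.Ioo 0 (1 / α) := by
      constructor
      · exact div_pos (by linarith) hc1
      · rw [div_lt_iff₀ hc1]
        have e : (c - 1) / α = 1 / α * (c - 1) := by ring
        linarith [e ▸ hγ2]
    have := huniq _ ⟨hb, hγeq⟩
    have e2 : γ - 1 = b₀ * (c - 1) := by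
      rw [← this]; field_simp
    linarith [e2]
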